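/- arXiv:0811.4059 — 2 statements merged into one kernel-verified Lean document; each statement's English description precedes it below -/
import Mathlib

section
/- The assignment (x, Z) ↦ (AZ + B)(CZ + D)⁻¹ defines a group action of Sp(g, ℝ) on the Siegel upper half space ℋ_g: the identity acts trivially and (xy) · Z = x · (y · Z) for all x, y ∈ Sp(g, ℝ) and Z ∈ ℋ_g. -/
open Matrix

noncomputable section

/-- The standard symplectic form matrix J = [[0, I], [-I, 0]]. -/
def Jmat (R : Type*) [CommRing R] (n : Type*) [Fintype n] [DecidableEq n] :
    Matrix (n ⊕ n) (n ⊕ n) R :=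
  Matrix.fromBlocks 0 1 (-1) 0

/-- Membership in the symplectic group: xᵀ J x = J. -/
def IsSp {R : Type*} [CommRing R] {n : Type*} [Fintype n] [DecidableEq n]
    (x : Matrix (n ⊕ n) (n ⊕ n) R) : Prop :=
  xᵀ * Jmat R n * x = Jmat R n

/-- Membership in the Siegel upper half space: symmetric with positive definite
imaginary part. -/
def InSiegel {n : Type*} [Fintype n] (Z : Matrix n n ℂ) : Prop :=
  Z.IsSymm ∧ (Z.map Complex.im).PosDef

/-- The action of the symplectic group by fractional linear transformations:
x · Z = (A Z + B)(C Z + D)⁻¹ for x = [[A,B],[C,D]]. -/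
def spAct {n : Type*} [Fintype n] [DecidableEq n]
    (x : Matrix (n ⊕ n) (n ⊕ n) ℝ) (Z : Matrix n n ℂ) : Matrix n n ℂ :=
  (x.toBlocks₁₁.map (Complex.ofReal) * Z + x.toBlocks₁₂.map (Complex.ofReal)) *
    (x.toBlocks₂₁.map (Complex.ofReal) * Z + x.toBlocks₂₂.map (Complex.ofReal))⁻¹

namespace SpAux

set_option linter.unusedSectionVars false

variable {n : Type*} [Fintype n] [DecidableEq n]

/-- Complexification of a real matrix. -/
def cm {m k : Type*} (M : Matrix m k ℝ) : Matrix m k ℂ := M.map Complex.ofReal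

lemma cm_mul {m k l : Type*} [Fintype k] (M : Matrix m k ℝ) (N : Matrix k l ℝ) :
    cm (M * N) = cm M * cm N := by
  ext i j; simp [cm, Matrix.mul_apply]

lemma cm_add {m k : Type*} (M N : Matrix m k ℝ) : cm (M + N) = cm M + cm N := by
  ext i j; simp [cm]

lemma cm_sub {m k : Type*} (M N : Matrix m k ℝ) : cm (M - N) = cm M - cm N := by
  ext i j; simp [cm]

lemma cm_transpose {m k : Type*} (M : Matrix m k ℝ) : cm Mᵀ = (cm M)ᵀ := by
  ext i j; simp [cm]

lemma cm_conjTranspose {m k : Type*} (M : Matrix m k ℝ) : (cm M)ᴴ = cm Mᵀ := by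
  ext i j; simp [cm, conjTranspose_apply]

lemma cm_one : cm (1 : Matrix n n ℝ) = 1 := by
  ext i j; by_cases h : i = j <;> simp [cm, Matrix.one_apply, h]

lemma cm_zero {m k : Type*} : cm (0 : Matrix m k ℝ) = 0 := by
  ext i j; simp [cm]

lemma cm_isUnit (M : Matrix n n ℝ) (h : IsUnit M.det) : IsUnit (cm M) := by
  rw [Matrix.isUnit_iff_isUnit_det]
  have : (cm M).det = Complex.ofReal M.det := by
    exact (RingHom.map_det Complex.ofRealHom M).symm
  rw [this]
  exact (Complex.ofRealHom : ℝ →+* ℂ).isUnit_map h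

lemma star_dot_self_eq_zero {w : n → ℂ} (h : star w ⬝ᵥ w = 0) : w = 0 := by
  have h1 : ∑ i, (Complex.normSq (w i) : ℂ) = 0 := by
    rw [← h]
    simp [dotProduct, Complex.normSq_eq_conj_mul_self, Complex.star_def]
  have h2 : ∑ i, Complex.normSq (w i) = 0 := by exact_mod_cast h1
  funext i
  have := (Finset.sum_eq_zero_iff_of_nonneg
    (fun i _ => Complex.normSq_nonneg (w i))).mp h2 i (Finset.mem_univ i)
  exact Complex.normSq_eq_zero.mp this

lemma key_pos (P : Matrix n n ℝ) (hP : P.PosDef) (v : n → ℂ)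
    (h : star v ⬝ᵥ (cm P *ᵥ v) = 0) : v = 0 := by
  obtain ⟨S, hS⟩ : ∃ S : Matrix n n ℝ, S.PosSemidef ∧ S * S = P :=
    by open scoped MatrixOrder in exact ⟨CFC.sqrt P, (CFC.sqrt_nonneg P).posSemidef,
      CFC.sqrt_mul_sqrt_self P hP.posSemidef.nonneg⟩
  have hdet : IsUnit S.det := by
    have h2 : S.det * S.det = P.det := by rw [← det_mul, hS.2]
    have : P.det ≠ 0 := ne_of_gt hP.det_pos
    exact isUnit_iff_ne_zero.mpr (fun h0 => this (by rw [← h2, h0, zero_mul]))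
  have hSc : IsUnit (cm S) := cm_isUnit S hdet
  have hherm : (cm S)ᴴ = cm S := by
    rw [cm_conjTranspose]
    have : Sᵀ = S := by
      rw [← S.conjTranspose_eq_transpose_of_trivial]; exact hS.1.isHermitian.eq
    rw [this]
  have hsplit : cm P = (cm S)ᴴ * cm S := by rw [hherm, ← cm_mul, hS.2]
  have h0 : star (cm S *ᵥ v) ⬝ᵥ (cm S *ᵥ v) = 0 := by
    rw [star_mulVec, ← dotProduct_mulVec, mulVec_mulVec, ← hsplit]
    exact h
  have hz := star_dot_self_eq_zero h0
  have hinj := Matrix.mulVec_injective_iff_isUnit.mpr hSc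
  have : cm S *ᵥ v = cm S *ᵥ 0 := by simpa using hz
  exact hinj this

variable {R : Type*} [CommRing R]

lemma sp_rel (x : Matrix (n ⊕ n) (n ⊕ n) R) (hx : IsSp x) :
    (x.toBlocks₁₁ᵀ * x.toBlocks₂₁ = x.toBlocks₂₁ᵀ * x.toBlocks₁₁) ∧
    (x.toBlocks₁₁ᵀ * x.toBlocks₂₂ - x.toBlocks₂₁ᵀ * x.toBlocks₁₂ = 1) ∧
    (x.toBlocks₁₂ᵀ * x.toBlocks₂₁ - x.toBlocks₂₂ᵀ * x.toBlocks₁₁ = -1) ∧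
    (x.toBlocks₁₂ᵀ * x.toBlocks₂₂ = x.toBlocks₂₂ᵀ * x.toBlocks₁₂) := by
  have hx' := hx
  rw [IsSp, Jmat, ← x.fromBlocks_toBlocks] at hx'
  set A := x.toBlocks₁₁; set B := x.toBlocks₁₂; set C := x.toBlocks₂₁; set D := x.toBlocks₂₂
  simp only [fromBlocks_transpose, fromBlocks_multiply, Matrix.mul_zero, Matrix.mul_one,
    Matrix.mul_neg, zero_add, add_zero, Matrix.neg_mul] at hx'
  have h11 := congrArg Matrix.toBlocks₁₁ hx'
  have h12 := congrArg Matrix.toBlocks₁₂ hx'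
  have h21 := congrArg Matrix.toBlocks₂₁ hx'
  have h22 := congrArg Matrix.toBlocks₂₂ hx'
  simp only [toBlocks_fromBlocks₁₁, toBlocks_fromBlocks₁₂, toBlocks_fromBlocks₂₁,
    toBlocks_fromBlocks₂₂] at h11 h12 h21 h22
  refine ⟨?_, ?_, ?_, ?_⟩
  · linear_combination (norm := noncomm_ring) h11
  · linear_combination (norm := noncomm_ring) h12
  · linear_combination (norm := noncomm_ring) h21
  · linear_combination (norm := noncomm_ring) h22

lemma isSp_mul {x y : Matrix (n ⊕ n) (n ⊕ n) R} (hx : IsSp x) (hy : IsSp y) :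
    IsSp (x * y) := by
  unfold IsSp at *
  rw [transpose_mul]
  calc yᵀ * xᵀ * (Jmat R n) * (x * y) = yᵀ * (xᵀ * Jmat R n * x) * y := by noncomm_ring
  _ = yᵀ * Jmat R n * y := by rw [hx]
  _ = Jmat R n := hy

lemma toBlocks_mul (x y : Matrix (n ⊕ n) (n ⊕ n) R) :
    ((x * y).toBlocks₁₁ = x.toBlocks₁₁ * y.toBlocks₁₁ + x.toBlocks₁₂ * y.toBlocks₂₁) ∧
    ((x * y).toBlocks₁₂ = x.toBlocks₁₁ * y.toBlocks₁₂ + x.toBlocks₁₂ * y.toBlocks₂₂) ∧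
    ((x * y).toBlocks₂₁ = x.toBlocks₂₁ * y.toBlocks₁₁ + x.toBlocks₂₂ * y.toBlocks₂₁) ∧
    ((x * y).toBlocks₂₂ = x.toBlocks₂₁ * y.toBlocks₁₂ + x.toBlocks₂₂ * y.toBlocks₂₂) := by
  have : x * y = fromBlocks
      (x.toBlocks₁₁ * y.toBlocks₁₁ + x.toBlocks₁₂ * y.toBlocks₂₁)
      (x.toBlocks₁₁ * y.toBlocks₁₂ + x.toBlocks₁₂ * y.toBlocks₂₂)
      (x.toBlocks₂₁ * y.toBlocks₁₁ + x.toBlocks₂₂ * y.toBlocks₂₁)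
      (x.toBlocks₂₁ * y.toBlocks₁₂ + x.toBlocks₂₂ * y.toBlocks₂₂) := by
    conv_lhs => rw [← x.fromBlocks_toBlocks, ← y.fromBlocks_toBlocks]
    rw [fromBlocks_multiply]
  rw [this]
  simp [toBlocks_fromBlocks₁₁, toBlocks_fromBlocks₁₂, toBlocks_fromBlocks₂₁,
    toBlocks_fromBlocks₂₂]

/-- The key invertibility lemma: CZ + D is invertible for symplectic x and Z in the
Siegel upper half space. -/
lemma key_inv (x : Matrix (n ⊕ n) (n ⊕ n) ℝ) (Z : Matrix n n ℂ)
    (hx : IsSp x) (hZ : InSiegel Z) :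
    IsUnit (cm x.toBlocks₂₁ * Z + cm x.toBlocks₂₂) := by
  obtain ⟨r1, r2, r3, r4⟩ := sp_rel x hx
  set a := cm x.toBlocks₁₁ with ha
  set b := cm x.toBlocks₁₂ with hb
  set c := cm x.toBlocks₂₁ with hc
  set d := cm x.toBlocks₂₂ with hd
  have c1 : aᵀ * c = cᵀ * a := by
    have := congrArg cm r1; rwa [cm_mul, cm_mul, cm_transpose, cm_transpose] at this
  have c2 : aᵀ * d - cᵀ * b = 1 := by
    have := congrArg cm r2
    rwa [cm_sub, cm_mul, cm_mul, cm_transpose, cm_transpose, cm_one] at this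
  have c3 : bᵀ * c - dᵀ * a = -1 := by
    have := congrArg cm r3
    rwa [cm_sub, cm_mul, cm_mul, cm_transpose, cm_transpose,
      show cm (-1 : Matrix n n ℝ) = -(1 : Matrix n n ℂ) by
        ext i j; by_cases h : i = j <;> simp [cm, Matrix.one_apply, h]] at this
  have c4 : bᵀ * d = dᵀ * b := by
    have := congrArg cm r4; rwa [cm_mul, cm_mul, cm_transpose, cm_transpose] at this
  have haH : aᴴ = aᵀ := by rw [ha, cm_conjTranspose, cm_transpose]
  have hbH : bᴴ = bᵀ := by rw [hb, cm_conjTranspose, cm_transpose]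
  have hcH : cᴴ = cᵀ := by rw [hc, cm_conjTranspose, cm_transpose]
  have hdH : dᴴ = dᵀ := by rw [hd, cm_conjTranspose, cm_transpose]
  set M := c * Z + d with hM
  set N := a * Z + b with hN
  have hkey : Mᴴ * N - Nᴴ * M = Z - Zᴴ := by
    have expand : Mᴴ * N - Nᴴ * M =
        Zᴴ * (cᵀ * a - aᵀ * c) * Z + Zᴴ * (cᵀ * b - aᵀ * d) + (dᵀ * a - bᵀ * c) * Z
          + (dᵀ * b - bᵀ * d) := by
      rw [hM, hN, conjTranspose_add, conjTranspose_add, conjTranspose_mul, conjTranspose_mul,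
        haH, hbH, hcH, hdH]
      noncomm_ring
    rw [expand, c1, sub_self, show cᵀ * b - aᵀ * d = -1 by
        rw [← c2]; noncomm_ring,
      show dᵀ * a - bᵀ * c = 1 by rw [← neg_sub, c3]; exact neg_neg 1, ← c4, sub_self]
    noncomm_ring
  have hZsub : Z - Zᴴ = (2 * Complex.I) • cm (Z.map Complex.im) := by
    ext i j
    have hsymm : Z j i = Z i j := hZ.1.apply i j
    simp only [Matrix.sub_apply, Matrix.smul_apply, conjTranspose_apply, cm, Matrix.map_apply,
      hsymm, smul_eq_mul, Complex.star_def]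
    rw [Complex.sub_conj]
    push_cast
    ring
  have hker : ∀ v, M *ᵥ v = 0 → v = 0 := by
    intro v hv
    have e1 : star v ⬝ᵥ ((Mᴴ * N) *ᵥ v) = 0 := by
      rw [← mulVec_mulVec, dotProduct_mulVec, ← star_mulVec, hv]
      simp
    have e2 : star v ⬝ᵥ ((Nᴴ * M) *ᵥ v) = 0 := by
      rw [← mulVec_mulVec, hv]
      simp
    have e3 : star v ⬝ᵥ ((Z - Zᴴ) *ᵥ v) = 0 := by
      rw [← hkey, sub_mulVec, dotProduct_sub, e1, e2, sub_zero]
    rw [hZsub, smul_mulVec, dotProduct_smul, smul_eq_mul] at e3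
    have h2I : (2 * Complex.I) ≠ 0 := by simp [Complex.I_ne_zero]
    exact key_pos _ hZ.2 v ((mul_eq_zero.mp e3).resolve_left h2I)
  rw [← Matrix.mulVec_injective_iff_isUnit]
  intro u w huw
  have h0 : M *ᵥ (u - w) = 0 := by rw [mulVec_sub, huw, sub_self]
  exact sub_eq_zero.mp (hker _ h0)

lemma spAct_eq (x : Matrix (n ⊕ n) (n ⊕ n) ℝ) (Z : Matrix n n ℂ) :
    spAct x Z = (cm x.toBlocks₁₁ * Z + cm x.toBlocks₁₂) *
      (cm x.toBlocks₂₁ * Z + cm x.toBlocks₂₂)⁻¹ := rfl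

end SpAux

open SpAux in
/-- (x, Z) ↦ (AZ+B)(CZ+D)⁻¹ is a group action of Sp(g,ℝ) on ℋ_g:
the identity acts trivially and (xy)·Z = x·(y·Z). -/
theorem stmt5 {g : ℕ} :
    (∀ Z : Matrix (Fin g) (Fin g) ℂ, InSiegel Z →
      spAct (1 : Matrix (Fin g ⊕ Fin g) (Fin g ⊕ Fin g) ℝ) Z = Z) ∧
    (∀ x y : Matrix (Fin g ⊕ Fin g) (Fin g ⊕ Fin g) ℝ,
      ∀ Z : Matrix (Fin g) (Fin g) ℂ, IsSp x → IsSp y → InSiegel Z →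
        spAct (x * y) Z = spAct x (spAct y Z)) := by
  constructor
  · intro Z hZ
    rw [spAct_eq, show (1 : Matrix (Fin g ⊕ Fin g) (Fin g ⊕ Fin g) ℝ) =
        fromBlocks 1 0 0 1 from (fromBlocks_one).symm]
    simp only [toBlocks_fromBlocks₁₁, toBlocks_fromBlocks₁₂, toBlocks_fromBlocks₂₁,
      toBlocks_fromBlocks₂₂, cm_one, cm_zero, Matrix.one_mul, Matrix.zero_mul,
      add_zero, zero_add, inv_one, Matrix.mul_one, mul_one]
  · intro x y Z hx hy hZ
    obtain ⟨m11, m12, m21, m22⟩ := toBlocks_mul x y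
    have hM' : IsUnit (cm y.toBlocks₂₁ * Z + cm y.toBlocks₂₂) := key_inv y Z hy hZ
    have hK : IsUnit (cm (x * y).toBlocks₂₁ * Z + cm (x * y).toBlocks₂₂) :=
      key_inv (x * y) Z (isSp_mul hx hy) hZ
    set a := cm x.toBlocks₁₁; set b := cm x.toBlocks₁₂
    set c := cm x.toBlocks₂₁; set d := cm x.toBlocks₂₂
    set a' := cm y.toBlocks₁₁; set b' := cm y.toBlocks₁₂
    set c' := cm y.toBlocks₂₁; set d' := cm y.toBlocks₂₂
    set M' := c' * Z + d' with hMdef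
    set N' := a' * Z + b' with hNdef
    have hdM' : IsUnit M'.det := (Matrix.isUnit_iff_isUnit_det _).mp hM'
    set K := (c * a' + d * c') * Z + (c * b' + d * d') with hKdef
    set L := (a * a' + b * c') * Z + (a * b' + b * d') with hLdef
    have hKu : IsUnit K := by
      rw [m21, m22, cm_add, cm_add, cm_mul, cm_mul, cm_mul, cm_mul] at hK
      exact hK
    have hdK : IsUnit K.det := (Matrix.isUnit_iff_isUnit_det _).mp hKu
    have lhs_eq : spAct (x * y) Z = L * K⁻¹ := by
      rw [spAct_eq, m11, m12, m21, m22]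
      simp only [cm_add, cm_mul]
      rfl
    have hW : spAct y Z = N' * M'⁻¹ := spAct_eq y Z
    have cancel : M' * M'⁻¹ = 1 := Matrix.mul_nonsing_inv _ hdM'
    have hnum : a * (N' * M'⁻¹) + b = L * M'⁻¹ := by
      have hb : b = b * (M' * M'⁻¹) := by rw [cancel, mul_one]
      have h2 : a * N' + b * M' = L := by rw [hNdef, hMdef, hLdef]; noncomm_ring
      calc a * (N' * M'⁻¹) + b = a * (N' * M'⁻¹) + b * (M' * M'⁻¹) := by rw [← hb]
      _ = (a * N' + b * M') * M'⁻¹ := by noncomm_ring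
      _ = L * M'⁻¹ := by rw [h2]
    have hden : c * (N' * M'⁻¹) + d = K * M'⁻¹ := by
      have hb : d = d * (M' * M'⁻¹) := by rw [cancel, mul_one]
      have h2 : c * N' + d * M' = K := by rw [hNdef, hMdef, hKdef]; noncomm_ring
      calc c * (N' * M'⁻¹) + d = c * (N' * M'⁻¹) + d * (M' * M'⁻¹) := by rw [← hb]
      _ = (c * N' + d * M') * M'⁻¹ := by noncomm_ring
      _ = K * M'⁻¹ := by rw [h2]
    rw [lhs_eq, spAct_eq x, hW]
    show L * K⁻¹ = (a * (N' * M'⁻¹) + b) * (c * (N' * M'⁻¹) + d)⁻¹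
    rw [hnum, hden]
    have hfin : (L * M'⁻¹) * (K * M'⁻¹)⁻¹ = L * K⁻¹ := by
      rw [Matrix.mul_inv_rev, Matrix.nonsing_inv_nonsing_inv _ hdM']
      calc L * M'⁻¹ * (M' * K⁻¹) = L * (M'⁻¹ * M') * K⁻¹ := by noncomm_ring
      _ = L * K⁻¹ := by rw [Matrix.nonsing_inv_mul _ hdM', mul_one]
    rw [hfin]
end
end

section
/- The stabilizer of the point i I_g ∈ ℋ_g under the Sp(g, ℝ)-action consists exactly of the matrices [[A, B], [-B, A]] ∈ Sp(g, ℝ) such that A + iB is a unitary g × g matrix; in particular the stabilizer is isomorphic as a group to the unitary group U(g). -/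
open Matrix

noncomputable section

namespace Stmt8Aux

variable {n : Type*} [Fintype n] [DecidableEq n]

lemma map_conjT (A : Matrix n n ℝ) :
    (A.map Complex.ofReal)ᴴ = Aᵀ.map Complex.ofReal := by
  ext i j; simp [Matrix.conjTranspose_apply, Matrix.map_apply]

lemma map_mul' (A B : Matrix n n ℝ) :
    (A * B).map Complex.ofReal = A.map Complex.ofReal * B.map Complex.ofReal :=
  Matrix.map_mul (f := Complex.ofRealHom)

lemma map_add' (A B : Matrix n n ℝ) :
    (A + B).map Complex.ofReal = A.map Complex.ofReal + B.map Complex.ofReal := by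
  ext i j; simp

lemma map_neg' (A : Matrix n n ℝ) :
    (-A).map Complex.ofReal = -(A.map Complex.ofReal) := by
  ext i j; simp

lemma map_one' : ((1 : Matrix n n ℝ)).map Complex.ofReal = 1 := by
  ext i j; simp [Matrix.one_apply]; split <;> simp

end Stmt8Aux

open Stmt8Aux in
theorem stmt8 {g : ℕ} (x : Matrix (Fin g ⊕ Fin g) (Fin g ⊕ Fin g) ℝ)
    (hx : IsSp x) :
    spAct x (Complex.I • (1 : Matrix (Fin g) (Fin g) ℂ)) =
        Complex.I • (1 : Matrix (Fin g) (Fin g) ℂ) ↔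
      ∃ A B : Matrix (Fin g) (Fin g) ℝ, x = Matrix.fromBlocks A B (-B) A ∧
        A.map Complex.ofReal + Complex.I • B.map Complex.ofReal ∈
          Matrix.unitaryGroup (Fin g) ℂ := by
  classical
  rcases isEmpty_or_nonempty (Fin g) with hg | hg
  · exact ⟨fun _ => ⟨0, 0, Subsingleton.elim _ _,
      ⟨Subsingleton.elim _ _, Subsingleton.elim _ _⟩⟩, fun _ => Subsingleton.elim _ _⟩
  set A := x.toBlocks₁₁ with hA
  set B := x.toBlocks₁₂ with hB
  set C := x.toBlocks₂₁ with hC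
  set D := x.toBlocks₂₂ with hD
  have hxb : x = Matrix.fromBlocks A B C D := (Matrix.fromBlocks_toBlocks x).symm
  unfold IsSp Jmat at hx
  rw [hxb] at hx
  simp only [Matrix.fromBlocks_transpose, Matrix.fromBlocks_multiply,
    mul_zero, mul_one, mul_neg, neg_mul, zero_add, add_zero] at hx
  have e11 := congrArg Matrix.toBlocks₁₁ hx
  have e12 := congrArg Matrix.toBlocks₁₂ hx
  simp only [Matrix.toBlocks_fromBlocks₁₁, Matrix.toBlocks_fromBlocks₁₂] at e11 e12
  constructor
  · intro h
    unfold spAct at h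
    rw [← hA, ← hB, ← hC, ← hD] at h
    simp only [mul_smul_comm, mul_one] at h
    set A' := A.map Complex.ofReal with hA'
    set B' := B.map Complex.ofReal with hB'
    set C' := C.map Complex.ofReal with hC'
    set D' := D.map Complex.ofReal with hD'
    have hdet : IsUnit (Complex.I • C' + D').det := by
      by_contra hdet
      rw [Matrix.nonsing_inv_apply_not_isUnit _ hdet, mul_zero] at h
      obtain ⟨k⟩ := hg
      have hk := congrFun (congrFun h k) k
      simp only [Matrix.zero_apply, Matrix.smul_apply, Matrix.one_apply_eq,
        smul_eq_mul, mul_one] at hk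
      exact Complex.I_ne_zero hk.symm
    have hNM : Complex.I • A' + B' = Complex.I • (Complex.I • C' + D') := by
      have h2 := congrArg (· * (Complex.I • C' + D')) h
      rwa [mul_assoc, Matrix.nonsing_inv_mul _ hdet, mul_one, smul_mul_assoc,
        one_mul] at h2
    have hent : ∀ j k, B j k = -(C j k) ∧ A j k = D j k := by
      intro j k
      have hjk := congrFun (congrFun hNM j) k
      simp only [hA', hB', hC', hD', Matrix.add_apply, Matrix.smul_apply,
        Matrix.map_apply, smul_eq_mul, Complex.ext_iff, Complex.add_re,
        Complex.add_im, Complex.mul_re, Complex.mul_im, Complex.I_re,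
        Complex.I_im, Complex.ofReal_re, Complex.ofReal_im] at hjk
      constructor
      · have := hjk.1; nlinarith [this]
      · have := hjk.2; nlinarith [this]
    have hCB : C = -B := by
      ext j k
      have := (hent j k).1
      simp [Matrix.neg_apply]
      linarith
    have hDA : D = A := by
      ext j k
      exact ((hent j k).2).symm
    refine ⟨A, B, by rw [hxb, hCB, hDA], ?_⟩
    rw [Matrix.mem_unitaryGroup_iff']
    -- real identities
    have r1 : Aᵀ * B = Bᵀ * A := by
      have e := e11
      rw [hCB] at e
      simp only [Matrix.transpose_neg, Matrix.neg_mul, Matrix.mul_neg, neg_neg,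
        ← sub_eq_add_neg] at e
      exact (sub_eq_zero.mp e).symm
    have r2 : Aᵀ * A + Bᵀ * B = 1 := by
      have e := e12
      rw [hCB, hDA] at e
      simp only [Matrix.transpose_neg, Matrix.neg_mul, neg_neg] at e
      rw [add_comm]
      exact e
    have hstar : star (A' + Complex.I • B')
        = Aᵀ.map Complex.ofReal - Complex.I • Bᵀ.map Complex.ofReal := by
      rw [Matrix.star_eq_conjTranspose, Matrix.conjTranspose_add,
        Matrix.conjTranspose_smul, Complex.star_def, Complex.conj_I, hA', hB',
        map_conjT, map_conjT, neg_smul, ← sub_eq_add_neg]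
    have expand : (Aᵀ.map Complex.ofReal - Complex.I • Bᵀ.map Complex.ofReal)
          * (A' + Complex.I • B')
        = (Aᵀ.map Complex.ofReal * A' + Bᵀ.map Complex.ofReal * B')
          + Complex.I • (Aᵀ.map Complex.ofReal * B' - Bᵀ.map Complex.ofReal * A') := by
      simp only [sub_mul, mul_add, mul_smul_comm, smul_mul_assoc, smul_smul,
        Complex.I_mul_I, neg_one_smul, smul_sub]
      abel
    have m1 : Aᵀ.map Complex.ofReal * A' + Bᵀ.map Complex.ofReal * B' = 1 := by
      rw [hA', hB', ← map_mul', ← map_mul', ← map_add', r2, map_one']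
    have m2 : Aᵀ.map Complex.ofReal * B' - Bᵀ.map Complex.ofReal * A' = 0 := by
      rw [hA', hB', ← map_mul', ← map_mul', r1, sub_self]
    rw [← hA', ← hB', hstar, expand, m1, m2, smul_zero, add_zero]
  · rintro ⟨A0, B0, hx0, hU⟩
    rw [hx0]
    unfold spAct
    simp only [Matrix.toBlocks_fromBlocks₁₁, Matrix.toBlocks_fromBlocks₁₂,
      Matrix.toBlocks_fromBlocks₂₁, Matrix.toBlocks_fromBlocks₂₂, map_neg',
      mul_smul_comm, mul_one, smul_neg, neg_add_eq_sub]
    have hnum : Complex.I • A0.map Complex.ofReal + B0.map Complex.ofReal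
        = Complex.I • (A0.map Complex.ofReal - Complex.I • B0.map Complex.ofReal) := by
      rw [smul_sub, smul_smul, Complex.I_mul_I, neg_one_smul, sub_neg_eq_add]
    have hstar2 : star (A0.map Complex.ofReal + Complex.I • B0.map Complex.ofReal)
        = (A0.map Complex.ofReal - Complex.I • B0.map Complex.ofReal)ᵀ := by
      rw [Matrix.star_eq_conjTranspose, Matrix.conjTranspose_add,
        Matrix.conjTranspose_smul, Complex.star_def, Complex.conj_I,
        map_conjT, map_conjT, Matrix.transpose_sub, Matrix.transpose_smul,
        Matrix.transpose_map, Matrix.transpose_map, neg_smul, ← sub_eq_add_neg]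
    have hunit : IsUnit
        (star (A0.map Complex.ofReal + Complex.I • B0.map Complex.ofReal)) :=
      ⟨⟨star _, _, Matrix.mem_unitaryGroup_iff'.mp hU,
        Matrix.mem_unitaryGroup_iff.mp hU⟩, rfl⟩
    have hdet2 : IsUnit (A0.map Complex.ofReal
        - Complex.I • B0.map Complex.ofReal).det := by
      have h1 := (Matrix.isUnit_iff_isUnit_det _).mp hunit
      rwa [hstar2, Matrix.det_transpose] at h1
    rw [hnum, smul_mul_assoc, Matrix.mul_nonsing_inv _ hdet2]
end
end
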